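/- Online-to-offline regret identity for ridge-style incremental updates: let L_t : ℝⁿ → ℝ (t = 1,…,T) be differentiable convex loss functions, U_0 differentiable strictly convex, and define U_{t+1} = U_t + L_t with β_{t+1} = argmin_β U_{t+1}(β) (assumed to exist with ∇U_{t+1}(β_{t+1}) = 0). Then for every β ∈ ℝⁿ: ∑_{t=1}^{T} L_t(β_t) - (Δ_{U_0}(β, β_0) + ∑_{t=1}^{T} L_t(β)) = ∑_{t=1}^{T} Δ_{U_{t+1}}(β_t, β_{t+1}) - Δ_{U_{T+1}}(β, β_{T+1}). -/

import Mathlib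

/-- Bregman divergence of a differentiable function `G`. -/
noncomputable def bregman {n : ℕ} (G : EuclideanSpace ℝ (Fin n) → ℝ)
    (β' β : EuclideanSpace ℝ (Fin n)) : ℝ :=
  G β' - G β - (inner ℝ (β' - β) (gradient G β) : ℝ)

lemma telescope_icc (T : ℕ) (g : ℕ → ℝ) :
    ∑ t ∈ Finset.Icc 1 T, (g t - g (t + 1)) = g 1 - g (T + 1) := by
  induction T with
  | zero => simp
  | succ T ih =>
      rw [Finset.sum_Icc_succ_top (by omega), ih]
      ring

/-- Online-to-offline regret identity for ridge-style incremental updates: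
with `U_{t+1} = U_t + L_t` and `β_t = argmin U_t` (first-order condition
`∇U_t(β_t) = 0`), for every comparator `β`,
`∑ L_t(β_t) - (Δ_{U_0}(β, β_0) + ∑ L_t(β))
   = ∑ Δ_{U_{t+1}}(β_t, β_{t+1}) - Δ_{U_{T+1}}(β, β_{T+1})`. -/
theorem online_to_offline_regret_identity {n T : ℕ}
    (U : ℕ → EuclideanSpace ℝ (Fin n) → ℝ)
    (L : ℕ → EuclideanSpace ℝ (Fin n) → ℝ)
    (β : ℕ → EuclideanSpace ℝ (Fin n))
    (hLdiff : ∀ t, Differentiable ℝ (L t))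
    (hLconv : ∀ t, ConvexOn ℝ Set.univ (L t))
    (hUdiff : ∀ t, Differentiable ℝ (U t))
    (hU0conv : StrictConvexOn ℝ Set.univ (U 0))
    (hU1 : U 1 = U 0)
    (hrec : ∀ t, 1 ≤ t → t ≤ T → U (t + 1) = fun x => U t x + L t x)
    (hmin : ∀ t, t ≤ T + 1 → IsMinOn (U t) Set.univ (β t))
    (hgrad : ∀ t, t ≤ T + 1 → gradient (U t) (β t) = 0)
    (b : EuclideanSpace ℝ (Fin n)) :
    ∑ t ∈ Finset.Icc 1 T, L t (β t)
        - (bregman (U 0) b (β 0) + ∑ t ∈ Finset.Icc 1 T, L t b)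
      = ∑ t ∈ Finset.Icc 1 T, bregman (U (t + 1)) (β t) (β (t + 1))
        - bregman (U (T + 1)) b (β (T + 1)) := by
  have hbreg : ∀ t, t ≤ T + 1 → ∀ x, bregman (U t) x (β t) = U t x - U t (β t) := by
    intro t ht x
    simp [bregman, hgrad t ht]
  -- U (m+1) = U 1 + partial sums of losses
  have key : ∀ m, m ≤ T → ∀ x, U (m + 1) x = U 1 x + ∑ t ∈ Finset.Icc 1 m, L t x := by
    intro m
    induction m with
    | zero => intro _ x; simp
    | succ m ih =>
        intro hm x
        rw [hrec (m + 1) (by omega) hm]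
        simp only [ih (by omega), Finset.sum_Icc_succ_top (show 1 ≤ m + 1 by omega)]
        ring
  have hb0 : U 0 (β 1) = U 0 (β 0) := by
    have h1 := (hmin 1 (by omega)) (Set.mem_univ (β 0))
    have h0 := (hmin 0 (by omega)) (Set.mem_univ (β 1))
    rw [hU1] at h1
    exact le_antisymm h1 h0
  have hterm : ∀ t ∈ Finset.Icc 1 T,
      bregman (U (t + 1)) (β t) (β (t + 1))
        = L t (β t) + (U t (β t) - U (t + 1) (β (t + 1))) := by
    intro t ht
    rw [Finset.mem_Icc] at ht
    rw [hbreg (t + 1) (by omega), hrec t ht.1 ht.2]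
    ring
  rw [Finset.sum_congr rfl hterm, Finset.sum_add_distrib, telescope_icc,
    hbreg 0 (by omega), hbreg (T + 1) (by omega), key T le_rfl b, hU1, hb0]
  ring
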